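/- Let n, m, k satisfy k ≤ m if m < n and k < n otherwise, and let d_1,...,d_k ∈ ℕ with d_k = 0. Then the set of n×m integer matrices A whose HNF diagonal begins with (d_1,...,d_k) has natural density 0. -/

import Mathlib

open Filter

/-- Real value of the Riemann zeta function at a natural number argument. -/
noncomputable def zetaR (k : ℕ) : ℝ := ∑' n : ℕ, (1 : ℝ) / (n + 1 : ℝ) ^ k

open scoped Classical in
/-- Number of matrices of `S` in the cube of side `2B` centered at `z`. -/
noncomputable def matCubeCount {n m : ℕ} (S : Set (Matrix (Fin n) (Fin m) ℤ))
    (z : Matrix (Fin n) (Fin m) ℤ) (B : ℕ) : ℕ :=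
  (Finset.filter (fun A : Fin n → Fin m → ℤ => Matrix.of A ∈ S)
    (Fintype.piFinset fun i =>
      Fintype.piFinset fun l => Finset.Ico (z i l - (B : ℤ)) (z i l + (B : ℤ)))).card

/-- Natural density of a set of `n × m` integer matrices, via counting in cubes
of side `2B` and arbitrary center, normalized by `(2B)^(nm)`. -/
def HasMatDensity {n m : ℕ} (S : Set (Matrix (Fin n) (Fin m) ℤ)) (δ : ℝ) : Prop :=
  ∀ z : Matrix (Fin n) (Fin m) ℤ,
    Tendsto (fun B : ℕ => (matCubeCount S z B : ℝ) / (2 * (B : ℝ)) ^ (n * m))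
      atTop (nhds δ)

/-- `H` is in Hermite normal form with `r` nonzero rows and pivot columns `j`. -/
def IsHNFWith {n m : ℕ} (H : Matrix (Fin n) (Fin m) ℤ) (r : ℕ) (hr : r ≤ n)
    (j : Fin r → Fin m) : Prop :=
  StrictMono j ∧
  (∀ i : Fin n, r ≤ (i : ℕ) → ∀ l, H i l = 0) ∧
  (∀ i : Fin r, 0 < H (Fin.castLE hr i) (j i)) ∧
  (∀ i : Fin r, ∀ l : Fin m, (l : ℕ) < (j i : ℕ) → H (Fin.castLE hr i) l = 0) ∧
  (∀ i : Fin r, ∀ k : Fin n, (k : ℕ) < (i : ℕ) →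
    0 ≤ H k (j i) ∧ H k (j i) < H (Fin.castLE hr i) (j i))

/-- `H` is in Hermite normal form. -/
def IsHNF {n m : ℕ} (H : Matrix (Fin n) (Fin m) ℤ) : Prop :=
  ∃ (r : ℕ) (hr : r ≤ n) (j : Fin r → Fin m), IsHNFWith H r hr j

/-- A square integer matrix is unimodular if its determinant is `±1`. -/
def IsUnimodular {n : ℕ} (U : Matrix (Fin n) (Fin n) ℤ) : Prop :=
  U.det = 1 ∨ U.det = -1

/-- `H` is the Hermite normal form of `A`: `H` is in HNF and `A = U * H`
for some unimodular `U`. -/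
def IsHNFOf {n m : ℕ} (H A : Matrix (Fin n) (Fin m) ℤ) : Prop :=
  IsHNF H ∧ ∃ U : Matrix (Fin n) (Fin n) ℤ, IsUnimodular U ∧ A = U * H


section AuxDensity

open Finset

lemma aux_card_le_prod_of_determined {ι : Type*} [Fintype ι] [DecidableEq ι]
    (S : ι → Finset ℤ) (P : (ι → ℤ) → Prop) [DecidablePred P] (K : Finset ι)
    (h : ∀ f g : ι → ℤ, P f → P g → (∀ j ∈ K, f j = g j) → f = g) :
    ((Fintype.piFinset S).filter P).card ≤ ∏ i ∈ K, (S i).card := by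
  have hcard : (Fintype.piFinset fun j : {x // x ∈ K} => S j.1).card = ∏ i ∈ K, (S i).card := by
    rw [Fintype.card_piFinset]
    exact Finset.prod_coe_sort K fun i => (S i).card
  rw [← hcard]
  apply Finset.card_le_card_of_injOn (fun f (j : {x // x ∈ K}) => f j.1)
  · intro f hf
    rw [Finset.mem_coe, Finset.mem_filter] at hf
    exact Fintype.mem_piFinset.mpr fun j => Fintype.mem_piFinset.mp hf.1 j.1
  · intro f hf g hg hfg
    simp only [Finset.coe_filter, Set.mem_setOf_eq] at hf hg
    exact h f g hf.2 hg.2 fun j hj => congrFun hfg ⟨j, hj⟩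

lemma aux_card_le_restrict {ι κ : Type*} [Fintype ι] [Fintype κ] [DecidableEq ι] [DecidableEq κ]
    (S : ι → Finset ℤ) (u : κ → ι) (hu : Function.Injective u)
    (P : (ι → ℤ) → Prop) [DecidablePred P]
    (Q : (κ → ℤ) → Prop) [DecidablePred Q]
    (hPQ : ∀ f, P f → Q (fun a => f (u a))) :
    ((Fintype.piFinset S).filter P).card ≤
      ((Fintype.piFinset fun a => S (u a)).filter Q).card *
        ∏ i ∈ Finset.univ \ Finset.univ.image u, (S i).card := by
  rw [mul_comm]
  refine Finset.card_le_mul_card_image_of_maps_to (f := fun (g : ι → ℤ) (a : κ) => g (u a))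
    (t := (Fintype.piFinset fun a => S (u a)).filter Q) ?_ _ ?_
  · intro f hf
    rw [Finset.mem_filter] at hf ⊢
    exact ⟨Fintype.mem_piFinset.mpr fun a => Fintype.mem_piFinset.mp hf.1 (u a), hPQ f hf.2⟩
  · intro b _
    rw [Finset.filter_filter]
    apply aux_card_le_prod_of_determined
    intro f g hf hg hfg
    funext i
    by_cases hi : i ∈ Finset.univ.image u
    · obtain ⟨a, _, rfl⟩ := Finset.mem_image.mp hi
      exact (congrFun hf.2 a).trans (congrFun hg.2 a).symm
    · exact hfg i (Finset.mem_sdiff.mpr ⟨Finset.mem_univ _, hi⟩)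

lemma aux_det_count (s : ℕ) (k : ℕ) :
    ∀ S : Fin k × Fin k → Finset ℤ, (∀ p, (S p).card ≤ s) →
    ((Fintype.piFinset S).filter
      (fun f => (Matrix.of fun i j => f (i, j)).det = 0)).card ≤ k * s ^ (k * k - 1) := by
  induction k with
  | zero =>
      intro S _
      have he : ((Fintype.piFinset S).filter
          (fun f => (Matrix.of fun i j => f (i, j)).det = 0)) = ∅ := by
        apply Finset.filter_false_of_mem
        intro f _
        simp [Matrix.det_fin_zero]
      simp [he]
  | succ k ih =>
      intro S hS
      classical
      set cof : (Fin (k+1) × Fin (k+1) → ℤ) → Fin (k+1) → ℤ :=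
        fun f j => ((Matrix.of fun a b => f (a, b)).submatrix Fin.castSucc j.succAbove).det
        with hcof
      set u : Fin k × Fin k → Fin (k+1) × Fin (k+1) :=
        fun p => (p.1.castSucc, p.2.castSucc) with hudef
      have hu : Function.Injective u := by
        intro p q h
        rw [Prod.ext_iff] at h ⊢
        exact ⟨Fin.castSucc_injective _ h.1, Fin.castSucc_injective _ h.2⟩
      set v : Fin k × Fin (k+1) → Fin (k+1) × Fin (k+1) :=
        fun p => (p.1.castSucc, p.2) with hvdef
      set P : (Fin (k+1) × Fin (k+1) → ℤ) → Prop :=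
        fun f => (Matrix.of fun i j => f (i, j)).det = 0 with hPdef
      have hsplit : (Fintype.piFinset S).filter P ⊆
          ((Fintype.piFinset S).filter (fun f => P f ∧ ∃ j, cof f j ≠ 0)) ∪
          ((Fintype.piFinset S).filter (fun f => cof f (Fin.last k) = 0)) := by
        intro f hf
        rw [Finset.mem_filter] at hf
        rw [Finset.mem_union, Finset.mem_filter, Finset.mem_filter]
        by_cases hc : ∃ j, cof f j ≠ 0
        · exact Or.inl ⟨hf.1, hf.2, hc⟩
        · push_neg at hc
          exact Or.inr ⟨hf.1, hc _⟩
      -- the two expansions of cofactors depending only on the first k rows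
      have hcofb : ∀ (f : Fin (k+1) × Fin (k+1) → ℤ) (b : Fin k × Fin (k+1) → ℤ),
          (fun a => f (v a)) = b → ∀ j : Fin (k+1),
          cof f j = ((Matrix.of fun (a : Fin k) (c : Fin (k+1)) => b (a, c)).submatrix
            id j.succAbove).det := by
        intro f b hfb j
        simp only [hcof]
        have hm : ((Matrix.of fun a c => f (a, c)).submatrix Fin.castSucc j.succAbove)
            = ((Matrix.of fun a c => b (a, c)).submatrix id j.succAbove) := by
          ext a c
          simp only [Matrix.submatrix_apply, Matrix.of_apply, id_eq]
          exact congrFun hfb (a, j.succAbove c)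
        rw [hm]
      -- bound on the part with some nonzero cofactor
      have h1 : ((Fintype.piFinset S).filter (fun f => P f ∧ ∃ j, cof f j ≠ 0)).card ≤
          s ^ (k * (k+1)) * s ^ k := by
        rw [mul_comm (s ^ (k * (k+1)))]
        refine le_trans (Finset.card_le_mul_card_image_of_maps_to
          (f := fun (g : Fin (k+1) × Fin (k+1) → ℤ) (a : Fin k × Fin (k+1)) => g (v a))
          (t := Fintype.piFinset fun a => S (v a)) ?_ (s ^ k) ?_) ?_
        · intro f hf
          rw [Finset.mem_filter] at hf
          exact Fintype.mem_piFinset.mpr fun a => Fintype.mem_piFinset.mp hf.1 (v a)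
        · intro b _
          rw [Finset.filter_filter]
          by_cases hc : ∃ j0 : Fin (k+1),
              ((Matrix.of fun (a : Fin k) (c : Fin (k+1)) => b (a, c)).submatrix
                id j0.succAbove).det ≠ 0
          · obtain ⟨j0, hj0⟩ := hc
            set cb : Fin (k+1) → ℤ := fun j =>
              ((Matrix.of fun (a : Fin k) (c : Fin (k+1)) => b (a, c)).submatrix
                id j.succAbove).det with hcb
            set K : Finset (Fin (k+1) × Fin (k+1)) :=
              (Finset.univ.erase j0).image (fun j => (Fin.last k, j)) with hK
            have hKcard : K.card = k := by
              rw [hK, Finset.card_image_of_injective _ (fun x y h => (Prod.ext_iff.mp h).2),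
                Finset.card_erase_of_mem (Finset.mem_univ _), Finset.card_univ,
                Fintype.card_fin]
              omega
            calc ((Fintype.piFinset S).filter
                  (fun f => (P f ∧ ∃ j, cof f j ≠ 0) ∧ (fun a => f (v a)) = b)).card
                ≤ ∏ i ∈ K, (S i).card := by
                  apply aux_card_le_prod_of_determined
                  rintro f g ⟨⟨hPf, -⟩, hfb⟩ ⟨⟨hPg, -⟩, hgb⟩ hfg
                  have hexp : ∀ h : Fin (k+1) × Fin (k+1) → ℤ, (fun a => h (v a)) = b →
                      P h → (0:ℤ) = ∑ j : Fin (k+1),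
                        (-1) ^ ((Fin.last k : ℕ) + (j:ℕ)) * h (Fin.last k, j) * cb j := by
                    intro h hb hP
                    have hd := Matrix.det_succ_row
                      (Matrix.of fun a c => h (a, c)) (Fin.last k)
                    rw [hP] at hd
                    rw [Fin.succAbove_last] at hd
                    simp only [Matrix.of_apply] at hd
                    rw [hd]
                    refine Finset.sum_congr rfl fun j _ => ?_
                    have h' := hcofb h b hb j
                    simp only [hcof] at h'
                    simp only [hcb]
                    rw [← h']
                  have hzf := hexp f hfb hPf
                  have hzg := hexp g hgb hPg
                  funext p
                  obtain ⟨i, j⟩ := p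
                  rcases Fin.eq_castSucc_or_eq_last i with ⟨i', rfl⟩ | rfl
                  · exact (congrFun hfb (i', j)).trans (congrFun hgb (i', j)).symm
                  by_cases hj : j = j0
                  · cases hj
                    have hsub : ∑ j : Fin (k+1),
                        ((-1:ℤ) ^ ((Fin.last k : ℕ) + (j:ℕ)) * cb j) *
                          (f (Fin.last k, j) - g (Fin.last k, j)) = 0 := by
                      have : ∀ j : Fin (k+1),
                          ((-1:ℤ) ^ ((Fin.last k : ℕ) + (j:ℕ)) * cb j) *
                            (f (Fin.last k, j) - g (Fin.last k, j)) =
                          (-1) ^ ((Fin.last k : ℕ) + (j:ℕ)) * f (Fin.last k, j) * cb j -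
                          (-1) ^ ((Fin.last k : ℕ) + (j:ℕ)) * g (Fin.last k, j) * cb j := by
                        intro j; ring
                      rw [Finset.sum_congr rfl fun j _ => this j, Finset.sum_sub_distrib,
                        ← hzf, ← hzg, sub_zero]
                    rw [Finset.sum_eq_single j0] at hsub
                    · have hne : ((-1:ℤ) ^ ((Fin.last k : ℕ) + (j0:ℕ)) * cb j0) ≠ 0 :=
                        mul_ne_zero (pow_ne_zero _ (by norm_num)) hj0
                      have := (mul_eq_zero.mp hsub).resolve_left hne
                      exact sub_eq_zero.mp this
                    · intro j _ hjne
                      have : f (Fin.last k, j) = g (Fin.last k, j) :=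
                        hfg (Fin.last k, j) (by
                          rw [hK]
                          exact Finset.mem_image_of_mem _
                            (Finset.mem_erase.mpr ⟨hjne, Finset.mem_univ _⟩))
                      rw [this, sub_self, mul_zero]
                    · intro hj0mem
                      exact absurd (Finset.mem_univ j0) hj0mem
                  · exact hfg (Fin.last k, j) (by
                      rw [hK]
                      exact Finset.mem_image_of_mem _
                        (Finset.mem_erase.mpr ⟨hj, Finset.mem_univ _⟩))
              _ ≤ s ^ K.card := Finset.prod_le_pow_card _ _ _ (fun i _ => hS i)
              _ = s ^ k := by rw [hKcard]
          · push_neg at hc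
            have he : ((Fintype.piFinset S).filter
                (fun f => (P f ∧ ∃ j, cof f j ≠ 0) ∧ (fun a => f (v a)) = b)) = ∅ := by
              apply Finset.filter_false_of_mem
              rintro f _ ⟨⟨-, j, hj⟩, hfb⟩
              exact hj ((hcofb f b hfb j).trans (hc j))
            simp [he]
        · have : (Fintype.piFinset fun a => S (v a)).card ≤ s ^ (k * (k+1)) := by
            rw [Fintype.card_piFinset]
            calc ∏ a : Fin k × Fin (k+1), (S (v a)).card
                ≤ s ^ (Finset.univ : Finset (Fin k × Fin (k+1))).card :=
                  Finset.prod_le_pow_card _ _ _ (fun i _ => hS _)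
              _ = s ^ (k * (k+1)) := by
                  rw [Finset.card_univ, Fintype.card_prod, Fintype.card_fin, Fintype.card_fin]
          exact Nat.mul_le_mul le_rfl this
      -- bound on the part with vanishing corner cofactor
      have h2 : ((Fintype.piFinset S).filter (fun f => cof f (Fin.last k) = 0)).card ≤
          (k * s ^ (k * k - 1)) * s ^ (2 * k + 1) := by
        have hfac : ∀ f, cof f (Fin.last k) = 0 →
            (Matrix.of fun i j => (fun a => f (u a)) (i, j)).det = 0 := by
          intro f hf
          rw [← hf, hcof]
          congr 1
          ext a c
          simp [hudef, Fin.succAbove_last]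
        refine le_trans (aux_card_le_restrict S u hu _
          (fun g => (Matrix.of fun i j => g (i, j)).det = 0) hfac) ?_
        have hihs := ih (fun a => S (u a)) (fun p => hS _)
        have hcompl : ∏ i ∈ Finset.univ \ Finset.univ.image u, (S i).card ≤ s ^ (2 * k + 1) := by
          calc ∏ i ∈ Finset.univ \ Finset.univ.image u, (S i).card
              ≤ s ^ (Finset.univ \ Finset.univ.image u).card :=
                Finset.prod_le_pow_card _ _ _ (fun i _ => hS _)
            _ ≤ s ^ (2 * k + 1) := by
                apply le_of_eq
                congr 1
                rw [Finset.card_sdiff_of_subset (Finset.subset_univ _), Finset.card_univ,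
                  Finset.card_image_of_injective _ hu, Finset.card_univ]
                simp only [Fintype.card_prod, Fintype.card_fin]
                obtain ⟨a, ha⟩ : ∃ a, k * k = a := ⟨_, rfl⟩
                have hb : (k+1) * (k+1) = a + 2*k + 1 := by rw [← ha]; ring
                rw [ha, hb]
                exact Nat.sub_eq_of_eq_add (by ring)
        exact Nat.mul_le_mul hihs hcompl
      -- combine
      refine le_trans (Finset.card_le_card hsplit) (le_trans (Finset.card_union_le _ _) ?_)
      rcases Nat.eq_zero_or_pos k with rfl | hkpos
      · refine le_trans (Nat.add_le_add h1 h2) ?_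
        simp
      · have hexp1 : s ^ (k * (k+1)) * s ^ k = s ^ ((k+1) * (k+1) - 1) := by
          rw [← pow_add]
          congr 1
          obtain ⟨a, ha⟩ : ∃ a, k * k = a := ⟨_, rfl⟩
          have h1' : k * (k+1) = a + k := by rw [← ha]; ring
          have h2' : (k+1) * (k+1) = a + 2*k + 1 := by rw [← ha]; ring
          rw [h1', h2']
          omega
        have hexp2 : k * s ^ (k * k - 1) * s ^ (2 * k + 1) = k * s ^ ((k+1) * (k+1) - 1) := by
          rw [mul_assoc, ← pow_add]
          congr 2
          obtain ⟨a, ha⟩ : ∃ a, k * k = a := ⟨_, rfl⟩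
          have ha1 : 1 ≤ a := by rw [← ha]; exact Nat.mul_pos hkpos hkpos
          have h2' : (k+1) * (k+1) = a + 2*k + 1 := by rw [← ha]; ring
          rw [ha, h2']
          omega
        refine le_trans (Nat.add_le_add h1 h2) ?_
        rw [hexp1, hexp2]
        exact le_of_eq (by ring)

lemma aux_strictMono_le {r m : ℕ} {j : Fin r → Fin m} (hj : StrictMono j) (i : Fin r) :
    (i : ℕ) ≤ (j i : ℕ) := by
  have H : ∀ a : ℕ, ∀ h : a < r, a ≤ (j ⟨a, h⟩ : ℕ) := by
    intro a
    induction a with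
    | zero => intro _; exact Nat.zero_le _
    | succ b ihb =>
        intro h
        have hb : b < r := Nat.lt_of_succ_lt h
        have hlt : j ⟨b, hb⟩ < j ⟨b + 1, h⟩ := hj (by simp [Fin.lt_def])
        have h1 := ihb hb
        have h2 := Fin.lt_def.mp hlt
        omega
  exact H i.1 i.2

lemma aux_hnf_zero {n m k : ℕ} (hk : 0 < k) (hkn : k ≤ n) (hkm : k ≤ m)
    (H : Matrix (Fin n) (Fin m) ℤ) (hH : IsHNF H)
    (hdiag : H (Fin.castLE hkn ⟨k - 1, Nat.sub_lt hk Nat.one_pos⟩)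
      (Fin.castLE hkm ⟨k - 1, Nat.sub_lt hk Nat.one_pos⟩) = 0) :
    ∀ (t : Fin n) (l : Fin m), k - 1 ≤ (t : ℕ) → (l : ℕ) < k → H t l = 0 := by
  obtain ⟨r, hr, j, hmono, hzero, hpos, hleft, -⟩ := hH
  intro t l ht hl
  by_cases htr : r ≤ (t : ℕ)
  · exact hzero t htr l
  push_neg at htr
  set t' : Fin r := ⟨t, htr⟩ with ht'
  have hct : Fin.castLE hr t' = t := by
    apply Fin.ext
    rfl
  by_cases hjl : (l : ℕ) < (j t' : ℕ)
  · rw [← hct]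
    exact hleft t' l hjl
  push_neg at hjl
  exfalso
  have h1 : (t' : ℕ) ≤ (j t' : ℕ) := aux_strictMono_le hmono t'
  have ht'v : (t' : ℕ) = k - 1 := by
    have : (t' : ℕ) = (t : ℕ) := rfl
    omega
  have hjv : ((j t') : ℕ) = k - 1 := by
    have : (t' : ℕ) = (t : ℕ) := rfl
    omega
  have hp := hpos t'
  have e1 : Fin.castLE hr t' = Fin.castLE hkn ⟨k - 1, Nat.sub_lt hk Nat.one_pos⟩ := by
    apply Fin.ext
    simpa using ht'v
  have e2 : j t' = Fin.castLE hkm ⟨k - 1, Nat.sub_lt hk Nat.one_pos⟩ := by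
    apply Fin.ext
    simpa using hjv
  rw [e1, e2, hdiag] at hp
  exact lt_irrefl 0 hp

lemma aux_block_det_zero {n m k : ℕ} (hk : 0 < k) (hkn : k ≤ n) (hkm : k ≤ m)
    (A H : Matrix (Fin n) (Fin m) ℤ) (hHA : IsHNFOf H A)
    (hdiag : H (Fin.castLE hkn ⟨k - 1, Nat.sub_lt hk Nat.one_pos⟩)
      (Fin.castLE hkm ⟨k - 1, Nat.sub_lt hk Nat.one_pos⟩) = 0) :
    (Matrix.of fun (a : Fin k) (b : Fin k) =>
      A (Fin.castLE hkn a) (Fin.castLE hkm b)).det = 0 := by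
  classical
  obtain ⟨hHNF, U, -, hA⟩ := hHA
  by_contra hdet
  set Bm : Matrix (Fin k) (Fin k) ℤ :=
    Matrix.of fun a b => A (Fin.castLE hkn a) (Fin.castLE hkm b) with hBm
  set B' : Matrix (Fin k) (Fin k) ℚ := Bm.map (Int.cast) with hB'
  have hdet' : B'.det ≠ 0 := by
    have : ((Bm.det : ℤ) : ℚ) = B'.det := RingHom.map_det (Int.castRingHom ℚ) Bm
    rw [← this]
    exact_mod_cast hdet
  have hunit : IsUnit B' := (Matrix.isUnit_iff_isUnit_det _).mpr (isUnit_iff_ne_zero.mpr hdet')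
  have hli : LinearIndependent ℚ (fun i => B' i) :=
    Matrix.linearIndependent_rows_iff_isUnit.mpr hunit
  set w : Fin n → (Fin k → ℚ) := fun t b => ((H t (Fin.castLE hkm b) : ℤ) : ℚ) with hw
  set T : Finset (Fin k → ℚ) :=
    (Finset.univ.filter fun t : Fin n => (t : ℕ) < k - 1).image w with hT
  have hzero := aux_hnf_zero hk hkn hkm H hHNF hdiag
  have hmem : ∀ a : Fin k, B' a ∈ Submodule.span ℚ (T : Set (Fin k → ℚ)) := by
    intro a
    have hrow : B' a = ∑ t : Fin n, ((U (Fin.castLE hkn a) t : ℤ) : ℚ) • w t := by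
      funext b
      simp only [Finset.sum_apply, Pi.smul_apply, smul_eq_mul, hw]
      have : B' a b = ((Bm a b : ℤ) : ℚ) := rfl
      rw [this, hBm]
      simp only [Matrix.of_apply, hA, Matrix.mul_apply]
      push_cast
      rfl
    rw [hrow]
    apply Submodule.sum_mem
    intro t _
    by_cases htk : (t : ℕ) < k - 1
    · refine Submodule.smul_mem _ _ (Submodule.subset_span ?_)
      exact Finset.mem_coe.mpr
        (Finset.mem_image_of_mem w (Finset.mem_filter.mpr ⟨Finset.mem_univ _, htk⟩))
    · have hwt : w t = 0 := by
        funext b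
        have : H t (Fin.castLE hkm b) = 0 :=
          hzero t (Fin.castLE hkm b) (by omega) (by simpa using b.2)
        simp [hw, this]
      rw [hwt, smul_zero]
      exact Submodule.zero_mem _
  have h1 : Submodule.span ℚ (Set.range fun i => B' i) ≤
      Submodule.span ℚ (T : Set (Fin k → ℚ)) :=
    Submodule.span_le.mpr (by rintro _ ⟨a, rfl⟩; exact hmem a)
  have h2 : Module.finrank ℚ (Submodule.span ℚ (Set.range fun i => B' i)) = k := by
    rw [finrank_span_eq_card hli, Fintype.card_fin]
  have h3 : Module.finrank ℚ (Submodule.span ℚ (T : Set (Fin k → ℚ))) ≤ k - 1 := by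
    refine le_trans (finrank_span_finset_le_card T) ?_
    calc T.card ≤ (Finset.univ.filter fun t : Fin n => (t : ℕ) < k - 1).card :=
          Finset.card_image_le
      _ ≤ k - 1 := by
          refine le_trans (Finset.card_le_card_of_injOn (t := Finset.range (k - 1)) Fin.val ?_ ?_) ?_
          · intro t htmem
            rw [Finset.mem_coe, Finset.mem_filter] at htmem
            exact Finset.mem_range.mpr htmem.2
          · intro x _ y _ hxy
            exact Fin.ext hxy
          · rw [Finset.card_range]
  have h4 := Submodule.finrank_mono h1
  omega

end AuxDensity

open Finset in
/-- If the prescribed diagonal prefix of the HNF ends with a zero, the density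
of matrices realizing it is `0`. -/
theorem density_hnf_diag_prefix_zero (n m k : ℕ) (hn : 2 ≤ n) (hk : 0 < k)
    (hcond : if m < n then k ≤ m else k < n) (hkn : k ≤ n) (hkm : k ≤ m)
    (d : Fin k → ℕ) (hdk : d ⟨k - 1, Nat.sub_lt hk Nat.one_pos⟩ = 0) :
    HasMatDensity
      {A : Matrix (Fin n) (Fin m) ℤ | ∃ H, IsHNFOf H A ∧
        ∀ i : Fin k, H (Fin.castLE hkn i) (Fin.castLE hkm i) = (d i : ℤ)}
      0 := by
  classical
  intro z
  set Sset : Set (Matrix (Fin n) (Fin m) ℤ) :=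
    {A : Matrix (Fin n) (Fin m) ℤ | ∃ H, IsHNFOf H A ∧
      ∀ i : Fin k, H (Fin.castLE hkn i) (Fin.castLE hkm i) = (d i : ℤ)} with hSset
  have hkk : k * k ≤ n * m := Nat.mul_le_mul hkn hkm
  have hkk1 : 1 ≤ k * k := Nat.mul_pos hk hk
  have hee : k * k - 1 + (n * m - k * k) = n * m - 1 := by
    obtain ⟨a, ha⟩ : ∃ a, k * k = a := ⟨_, rfl⟩
    obtain ⟨c, hc⟩ : ∃ c, n * m = c := ⟨_, rfl⟩
    rw [ha] at hkk1
    rw [ha, hc] at hkk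
    rw [ha, hc]
    omega
  have hbound : ∀ B : ℕ, matCubeCount Sset z B ≤ k * (2 * B) ^ (n * m - 1) := by
    intro B
    set box : Fin n × Fin m → Finset ℤ :=
      fun p => Finset.Ico (z p.1 p.2 - (B : ℤ)) (z p.1 p.2 + (B : ℤ)) with hbox
    have hboxcard : ∀ p, (box p).card = 2 * B := by
      intro p
      rw [hbox]
      rw [Int.card_Ico]
      have he : z p.1 p.2 + (B : ℤ) - (z p.1 p.2 - (B : ℤ)) = ((2 * B : ℕ) : ℤ) := by
        push_cast; ring
      rw [he, Int.toNat_natCast]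
    set u : Fin k × Fin k → Fin n × Fin m :=
      fun p => (Fin.castLE hkn p.1, Fin.castLE hkm p.2) with hudef
    have huinj : Function.Injective u := by
      intro p q h
      rw [Prod.ext_iff] at h ⊢
      exact ⟨(Fin.strictMono_castLE hkn).injective h.1,
        (Fin.strictMono_castLE hkm).injective h.2⟩
    have hstepA : matCubeCount Sset z B ≤
        ((Fintype.piFinset box).filter
          (fun g : Fin n × Fin m → ℤ =>
            (Matrix.of fun (a : Fin k) (b : Fin k) =>
              g (Fin.castLE hkn a, Fin.castLE hkm b)).det = 0)).card := by
      unfold matCubeCount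
      apply Finset.card_le_card_of_injOn (fun f (p : Fin n × Fin m) => f p.1 p.2)
      · intro f hf
        rw [Finset.mem_coe, Finset.mem_filter] at hf
        obtain ⟨hfmem, H, hHA, hdcond⟩ := hf
        rw [Finset.mem_coe, Finset.mem_filter]
        constructor
        · rw [Fintype.mem_piFinset]
          intro p
          exact Fintype.mem_piFinset.mp (Fintype.mem_piFinset.mp hfmem p.1) p.2
        · have hd0 : H (Fin.castLE hkn ⟨k - 1, Nat.sub_lt hk Nat.one_pos⟩)
              (Fin.castLE hkm ⟨k - 1, Nat.sub_lt hk Nat.one_pos⟩) = 0 := by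
            have := hdcond ⟨k - 1, Nat.sub_lt hk Nat.one_pos⟩
            rw [hdk] at this
            simpa using this
          exact aux_block_det_zero hk hkn hkm (Matrix.of f) H hHA hd0
      · intro f _ g _ hfg
        funext i l
        exact congrFun hfg (i, l)
    have hstepB := aux_card_le_restrict box u huinj
      (fun g : Fin n × Fin m → ℤ =>
        (Matrix.of fun (a : Fin k) (b : Fin k) =>
          g (Fin.castLE hkn a, Fin.castLE hkm b)).det = 0)
      (fun g : Fin k × Fin k → ℤ => (Matrix.of fun i j => g (i, j)).det = 0)
      (fun f hf => hf)
    have hdetc := aux_det_count (2 * B) k (fun a => box (u a))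
      (fun p => le_of_eq (hboxcard _))
    have hcompl : ∏ i ∈ Finset.univ \ Finset.univ.image u, (box i).card =
        (2 * B) ^ (n * m - k * k) := by
      rw [Finset.prod_congr rfl (fun i _ => hboxcard i), Finset.prod_const]
      congr 1
      rw [Finset.card_sdiff_of_subset (Finset.subset_univ _), Finset.card_univ,
        Finset.card_image_of_injective _ huinj, Finset.card_univ]
      simp [Fintype.card_prod]
    refine le_trans hstepA (le_trans hstepB ?_)
    rw [hcompl]
    refine le_trans (Nat.mul_le_mul_right _ hdetc) ?_
    rw [mul_assoc, ← pow_add]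
    apply le_of_eq
    rw [hee]
  have hupper : ∀ᶠ B : ℕ in atTop,
      (matCubeCount Sset z B : ℝ) / (2 * (B : ℝ)) ^ (n * m) ≤ (k : ℝ) / (2 * B) := by
    filter_upwards [eventually_ge_atTop 1] with B hB
    have hB1 : (1 : ℝ) ≤ (B : ℝ) := by exact_mod_cast hB
    have hxpos : (0 : ℝ) < 2 * (B : ℝ) := by linarith
    have hypos : (0 : ℝ) < (2 * (B : ℝ)) ^ (n * m - 1) := by positivity
    have hcast : (matCubeCount Sset z B : ℝ) ≤ (k : ℝ) * (2 * (B : ℝ)) ^ (n * m - 1) := by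
      calc (matCubeCount Sset z B : ℝ) ≤ ((k * (2 * B) ^ (n * m - 1) : ℕ) : ℝ) :=
            Nat.cast_le.mpr (hbound B)
        _ = (k : ℝ) * (2 * (B : ℝ)) ^ (n * m - 1) := by push_cast; ring
    have hpow : (2 * (B : ℝ)) ^ (n * m) = (2 * (B : ℝ)) ^ (n * m - 1) * (2 * (B : ℝ)) := by
      rw [← pow_succ]
      congr 1
      have hnm : 1 ≤ n * m := le_trans hkk1 hkk
      omega
    calc (matCubeCount Sset z B : ℝ) / (2 * (B : ℝ)) ^ (n * m)
        = (matCubeCount Sset z B : ℝ) / ((2 * (B : ℝ)) ^ (n * m - 1) * (2 * (B : ℝ))) := by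
          rw [hpow]
      _ ≤ ((k : ℝ) * (2 * (B : ℝ)) ^ (n * m - 1)) /
            ((2 * (B : ℝ)) ^ (n * m - 1) * (2 * (B : ℝ))) := by gcongr
      _ = (k : ℝ) / (2 * (B : ℝ)) := by
          rw [mul_comm (k : ℝ) ((2 * (B : ℝ)) ^ (n * m - 1))]
          exact mul_div_mul_left _ _ (ne_of_gt hypos)
  have hlow : ∀ᶠ B : ℕ in atTop,
      (0 : ℝ) ≤ (matCubeCount Sset z B : ℝ) / (2 * (B : ℝ)) ^ (n * m) :=
    Filter.Eventually.of_forall fun B => by positivity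
  have htend : Tendsto (fun B : ℕ => (k : ℝ) / (2 * (B : ℝ))) atTop (nhds 0) := by
    have he : (fun B : ℕ => (k : ℝ) / (2 * (B : ℝ))) =
        fun B : ℕ => ((k : ℝ) / 2) / (B : ℝ) := by
      funext B
      rw [div_div]
    rw [he]
    exact tendsto_const_div_atTop_nhds_zero_nat _
  exact tendsto_of_tendsto_of_tendsto_of_le_of_le' tendsto_const_nhds htend hlow hupper
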